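/- For α ∈ (0,1] and all u, v ∈ ℝ³, the power-law nonlinearity satisfies the strong monotonicity bound (u − v) · (a(u) − a(v)) ≥ α (|u| + |v|)^{α−1} |u − v|². -/

import Mathlib

open scoped RealInnerProductSpace

private lemma rpow_sub_one_mul {α x : ℝ} (hα : 0 < α) (hx : 0 ≤ x) :
    x ^ (α - 1) * x = x ^ α := by
  rcases eq_or_lt_of_le hx with h | h
  · subst h
    rw [Real.zero_rpow hα.ne', mul_zero]
  · calc x ^ (α - 1) * x = x ^ (α - 1) * x ^ (1:ℝ) := by rw [Real.rpow_one]
      _ = x ^ (α - 1 + 1) := (Real.rpow_add h _ _).symm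
      _ = x ^ α := by norm_num

/-- `a^α - b^α ≥ α (a+b)^(α-1) (a-b)` for `a ≥ b ≥ 0`. -/
private lemma key1 {α a b : ℝ} (hα : 0 < α) (hα1 : α ≤ 1) (hb : 0 ≤ b) (hab : b ≤ a) :
    α * (a + b) ^ (α - 1) * (a - b) ≤ a ^ α - b ^ α := by
  have ha : 0 ≤ a := hb.trans hab
  rcases eq_or_lt_of_le ha with h | hapos
  · have hb0 : b = 0 := le_antisymm (hab.trans h.symm.le) hb
    subst hb0; rw [← h]; norm_num
  -- weighted AM-GM : b^α * a^(1-α) ≤ α * b + (1-α) * a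
  have hgm : b ^ α * a ^ (1 - α) ≤ α * b + (1 - α) * a :=
    Real.geom_mean_le_arith_mean2_weighted hα.le (by linarith) hb ha (by ring)
  -- multiply by a^(α-1)
  have hmul : b ^ α * a ^ (1 - α) * a ^ (α - 1) = b ^ α := by
    rw [mul_assoc, ← Real.rpow_add hapos]
    norm_num
  have haexp : 0 < a ^ (α - 1) := Real.rpow_pos_of_pos hapos _
  have h2 : b ^ α ≤ α * (a ^ (α - 1) * b) + (1 - α) * a ^ α := by
    have := mul_le_mul_of_nonneg_right hgm haexp.le
    rw [hmul] at this
    calc b ^ α ≤ (α * b + (1 - α) * a) * a ^ (α - 1) := this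
      _ = α * (a ^ (α - 1) * b) + (1 - α) * (a ^ (α - 1) * a) := by ring
      _ = α * (a ^ (α - 1) * b) + (1 - α) * a ^ α := by
          rw [rpow_sub_one_mul hα ha]
  -- so a^α - b^α ≥ α a^(α-1) (a - b)
  have h3 : α * (a ^ (α - 1) * (a - b)) ≤ a ^ α - b ^ α := by
    have haa : a ^ (α - 1) * a = a ^ α := rpow_sub_one_mul hα ha
    nlinarith [h2]
  -- and a^(α-1) ≥ (a+b)^(α-1)
  have h4 : (a + b) ^ (α - 1) ≤ a ^ (α - 1) :=
    Real.rpow_le_rpow_of_nonpos hapos (by linarith) (by linarith)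
  calc α * (a + b) ^ (α - 1) * (a - b) ≤ α * (a ^ (α - 1) * (a - b)) := by
        have : (a + b) ^ (α - 1) * (a - b) ≤ a ^ (α - 1) * (a - b) :=
          mul_le_mul_of_nonneg_right h4 (by linarith)
        nlinarith [this]
    _ ≤ a ^ α - b ^ α := h3

/-- symmetric endpoint: `α (a+b)^(α-1) (a-b)^2 ≤ (a-b)(a^α - b^α)`. -/
private lemma endpoint1 {α a b : ℝ} (hα : 0 < α) (hα1 : α ≤ 1) (ha : 0 ≤ a) (hb : 0 ≤ b) :
    α * (a + b) ^ (α - 1) * (a - b) ^ 2 ≤ (a - b) * (a ^ α - b ^ α) := by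
  rcases le_total b a with h | h
  · have := key1 hα hα1 hb h
    nlinarith [this, sub_nonneg.2 h]
  · have := key1 hα hα1 ha h
    have h' : α * (b + a) ^ (α - 1) * (b - a) ≤ b ^ α - a ^ α := this
    rw [add_comm b a] at h'
    nlinarith [h', sub_nonneg.2 h]

/-- subadditivity: `(a+b)^α ≤ a^α + b^α`. -/
private lemma subadd {α a b : ℝ} (hα : 0 < α) (hα1 : α ≤ 1) (ha : 0 ≤ a) (hb : 0 ≤ b) :
    (a + b) ^ α ≤ a ^ α + b ^ α := by
  rcases eq_or_lt_of_le (add_nonneg ha hb) with h | hpos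
  · rw [← h, Real.zero_rpow hα.ne']
    positivity
  · set s := a + b with hs
    have h1 : a / s ≤ (a / s) ^ α := by
      have := Real.rpow_le_rpow_of_exponent_ge' (x := a / s) (by positivity)
        (by rw [div_le_one hpos]; linarith) hα.le hα1
      rwa [Real.rpow_one] at this
    have h2 : b / s ≤ (b / s) ^ α := by
      have := Real.rpow_le_rpow_of_exponent_ge' (x := b / s) (by positivity)
        (by rw [div_le_one hpos]; linarith) hα.le hα1
      rwa [Real.rpow_one] at this
    have hsum : a / s + b / s = 1 := by field_simp; exact hs.symm
    have hspos : (0:ℝ) < s ^ α := Real.rpow_pos_of_pos hpos _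
    have hmula : (a / s) ^ α * s ^ α = a ^ α := by
      rw [← Real.mul_rpow (by positivity) hpos.le, div_mul_cancel₀ _ hpos.ne']
    have hmulb : (b / s) ^ α * s ^ α = b ^ α := by
      rw [← Real.mul_rpow (by positivity) hpos.le, div_mul_cancel₀ _ hpos.ne']
    have : (a / s + b / s) * s ^ α ≤ ((a/s)^α + (b/s)^α) * s ^ α := by
      apply mul_le_mul_of_nonneg_right (by linarith) hspos.le
    rw [hsum, one_mul, add_mul, hmula, hmulb] at this
    exact this

private lemma key {α a b t : ℝ} (hα : 0 < α) (hα1 : α ≤ 1) (ha : 0 ≤ a) (hb : 0 ≤ b)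
    (ht : |t| ≤ a * b) :
    α * (a + b) ^ (α - 1) * (a ^ 2 - 2 * t + b ^ 2) ≤
      a ^ (α - 1) * a ^ 2 - a ^ (α - 1) * t - b ^ (α - 1) * t + b ^ (α - 1) * b ^ 2 := by
  obtain ⟨ht1, ht2⟩ := abs_le.mp ht
  set P := a ^ (α - 1) with hP
  set Q := b ^ (α - 1) with hQ
  set S := (a + b) ^ (α - 1) with hS
  have idP : P * a = a ^ α := rpow_sub_one_mul hα ha
  have idQ : Q * b = b ^ α := rpow_sub_one_mul hα hb
  have idS : S * (a + b) = (a + b) ^ α := rpow_sub_one_mul hα (by linarith)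
  have hSnn : 0 ≤ S := Real.rpow_nonneg (by linarith) _
  have E1 : α * S * (a - b) ^ 2 ≤ (a - b) * (a ^ α - b ^ α) := endpoint1 hα hα1 ha hb
  have E2 : (a + b) ^ α ≤ a ^ α + b ^ α := subadd hα hα1 ha hb
  have h1 : 0 ≤ P * a ^ 2 + Q * b ^ 2 - (P + Q) * (a * b) - α * S * (a - b) ^ 2 := by
    have e1 : P * a ^ 2 + Q * b ^ 2 - (P + Q) * (a * b)
        = (a - b) * (a ^ α - b ^ α) := by rw [← idP, ← idQ]; ring
    linarith [E1]
  have h2 : 0 ≤ P * a ^ 2 + Q * b ^ 2 + (P + Q) * (a * b) - α * S * (a + b) ^ 2 := by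
    have e2 : P * a ^ 2 + Q * b ^ 2 + (P + Q) * (a * b)
        = (a + b) * (a ^ α + b ^ α) := by rw [← idP, ← idQ]; ring
    have e3 : α * S * (a + b) ^ 2 = α * ((a + b) ^ α * (a + b)) := by
      rw [← idS]; ring
    have hrn : 0 ≤ (a + b) ^ α := Real.rpow_nonneg (by linarith) _
    have h4 : α * ((a + b) ^ α * (a + b)) ≤ (a + b) * (a ^ α + b ^ α) := by
      have h5 : α * (a + b) ^ α ≤ a ^ α + b ^ α := by nlinarith [E2, hrn]
      nlinarith [h5, add_nonneg ha hb]
    linarith [e2 ▸ e3 ▸ h4]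
  rcases eq_or_lt_of_le (mul_nonneg ha hb) with hab | hab
  · have ht0 : t = 0 := by
      have : |t| ≤ 0 := by rw [← hab] at ht; exact ht
      simpa using le_antisymm this (abs_nonneg t)
    subst ht0
    have hz1 : (P + Q) * (a * b) = 0 := by rw [← hab]; ring
    have hz2 : α * S * (a - b) ^ 2 = α * S * (a ^ 2 - 2 * 0 + b ^ 2) - 2 * (α * S) * (a * b) := by
      ring
    have hz3 : α * S * (a * b) = 0 := by rw [← hab]; ring
    linarith [h1]
  · nlinarith [mul_nonneg h1 (by linarith : (0:ℝ) ≤ a * b + t),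
      mul_nonneg h2 (by linarith : (0:ℝ) ≤ a * b - t), hab]

theorem stmt2 (α : ℝ) (hα : α ∈ Set.Ioc (0:ℝ) 1) (u v : EuclideanSpace ℝ (Fin 3)) :
    α * (‖u‖ + ‖v‖) ^ (α - 1) * ‖u - v‖ ^ 2 ≤
      ⟪u - v, (‖u‖ ^ (α - 1)) • u - (‖v‖ ^ (α - 1)) • v⟫ := by
  obtain ⟨hα0, hα1⟩ := hα
  have hexp : ⟪u - v, (‖u‖ ^ (α - 1)) • u - (‖v‖ ^ (α - 1)) • v⟫
      = ‖u‖ ^ (α - 1) * ‖u‖ ^ 2 - ‖u‖ ^ (α - 1) * ⟪u, v⟫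
        - ‖v‖ ^ (α - 1) * ⟪u, v⟫ + ‖v‖ ^ (α - 1) * ‖v‖ ^ 2 := by
    simp only [inner_sub_left, inner_sub_right, real_inner_smul_right,
      real_inner_self_eq_norm_sq, real_inner_comm v u]
    ring
  have hnorm : ‖u - v‖ ^ 2 = ‖u‖ ^ 2 - 2 * ⟪u, v⟫ + ‖v‖ ^ 2 := norm_sub_sq_real u v
  rw [hexp, hnorm]
  exact key hα0 hα1 (norm_nonneg u) (norm_nonneg v) (abs_real_inner_le_norm u v)
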